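/- arXiv:2007.03946 — 4 statements merged into one kernel-verified Lean document; each statement's English description precedes it below -/
import Mathlib

section
/- Let (X,d) be a finite metric space, r ≥ 0, S ⊆ X with pairwise distances strictly greater than 4r, and τ ∈ {0,…,k−1}. If there is a set C₁ ⊆ X with |C₁| ≤ k, satisfying for each ℓ ∈ [γ] the covering requirement |B(C₁,r) ∩ X_ℓ| ≥ m_ℓ, and with |C₁ ∩ B(S,r)| > τ, then there exists a set C₂ ⊆ X with |C₂| ≤ k satisfying |B(C₂,2r) ∩ X_ℓ| ≥ m_ℓ for each ℓ ∈ [γ] and |C₂ \ S| ≤ k − τ − 1. -/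
open scoped Classical

theorem stmt_3 {X : Type*} [MetricSpace X] [Fintype X] (r : ℝ) (hr : 0 ≤ r)
    (γ k τ : ℕ) (hτ : τ < k)
    (Xc : Fin γ → Finset X) (m : Fin γ → ℕ)
    (S : Finset X)
    (hS : ∀ s ∈ S, ∀ s' ∈ S, s ≠ s' → dist s s' > 4 * r)
    (C₁ : Finset X) (hC₁k : C₁.card ≤ k)
    (hC₁cov : ∀ ℓ : Fin γ,
      m ℓ ≤ ((Xc ℓ).filter (fun u => ∃ c ∈ C₁, dist c u ≤ r)).card)
    (hC₁S : τ < (C₁.filter (fun c => ∃ s ∈ S, dist s c ≤ r)).card) :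
    ∃ C₂ : Finset X, C₂.card ≤ k ∧
      (∀ ℓ : Fin γ,
        m ℓ ≤ ((Xc ℓ).filter (fun u => ∃ c ∈ C₂, dist c u ≤ 2 * r)).card) ∧
      (C₂ \ S).card ≤ k - τ - 1 := by
  set P : X → Prop := fun c => ∃ s ∈ S, dist s c ≤ r with hP
  set f : X → X := fun c => if h : P c then h.choose else c with hf
  have hfS : ∀ c, P c → f c ∈ S ∧ dist (f c) c ≤ r := by
    intro c hc
    simp only [hf, dif_pos hc]
    exact ⟨hc.choose_spec.1, hc.choose_spec.2⟩
  have hfid : ∀ c, ¬ P c → f c = c := by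
    intro c hc; simp [hf, dif_neg hc]
  refine ⟨C₁.image f, ?_, ?_, ?_⟩
  · exact le_trans (Finset.card_image_le) hC₁k
  · intro ℓ
    refine le_trans (hC₁cov ℓ) (Finset.card_le_card ?_)
    intro u hu
    simp only [Finset.mem_filter] at hu ⊢
    obtain ⟨hx, c, hc, hd⟩ := hu
    refine ⟨hx, f c, Finset.mem_image_of_mem f hc, ?_⟩
    by_cases hpc : P c
    · calc dist (f c) u ≤ dist (f c) c + dist c u := dist_triangle _ _ _
        _ ≤ r + r := add_le_add (hfS c hpc).2 hd
        _ = 2 * r := by ring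
    · rw [hfid c hpc]; linarith
  · have hsub : C₁.image f \ S ⊆ C₁.filter (fun c => ¬ P c) := by
      intro x hx
      rw [Finset.mem_sdiff] at hx
      obtain ⟨hx1, hx2⟩ := hx
      obtain ⟨c, hc, rfl⟩ := Finset.mem_image.mp hx1
      by_cases hpc : P c
      · exact absurd (hfS c hpc).1 hx2
      · rw [hfid c hpc] at hx2 ⊢
        exact Finset.mem_filter.mpr ⟨hc, hpc⟩
    have := Finset.card_filter_add_card_filter_not (s := C₁) (p := P)
    have hle := Finset.card_le_card hsub
    have hC₁S' : τ < (C₁.filter P).card := hC₁S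
    omega
end

section
/- Let (X,d) be a finite metric space, S ⊆ X with pairwise distances strictly greater than 4r, and let C₁ ⊆ X with |C₁| ≤ k. Define A = C₁ ∩ B(S,r), and for each p ∈ A let φ(p) be the unique point of S with p ∈ B(φ(p),r). Then C₂ := φ(A) ∪ (C₁ \ A) satisfies |C₂| ≤ k and B(C₁,r) ⊆ B(C₂,2r). -/
open scoped Classical

theorem stmt_4 {X : Type*} [MetricSpace X] [Fintype X] (r : ℝ) (hr : 0 ≤ r)
    (k : ℕ) (S : Finset X)
    (hS : ∀ s ∈ S, ∀ s' ∈ S, s ≠ s' → dist s s' > 4 * r)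
    (C₁ : Finset X) (hC₁k : C₁.card ≤ k)
    (A : Finset X) (hA : A = C₁.filter (fun c => ∃ s ∈ S, dist s c ≤ r))
    (φ : X → X)
    (hφ : ∀ p ∈ A, φ p ∈ S ∧ dist p (φ p) ≤ r) :
    (A.image φ ∪ (C₁ \ A)).card ≤ k ∧
    ∀ u : X, (∃ c ∈ C₁, dist c u ≤ r) →
      ∃ c ∈ A.image φ ∪ (C₁ \ A), dist c u ≤ 2 * r := by
  have hAsub : A ⊆ C₁ := by rw [hA]; exact Finset.filter_subset _ _
  constructor
  · calc (A.image φ ∪ (C₁ \ A)).card ≤ (A.image φ).card + (C₁ \ A).card :=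
          Finset.card_union_le _ _
      _ ≤ A.card + (C₁ \ A).card :=
          Nat.add_le_add_right Finset.card_image_le _
      _ = C₁.card := by
          have := Finset.card_le_card hAsub
          rw [Finset.card_sdiff_of_subset hAsub]; omega
      _ ≤ k := hC₁k
  · rintro u ⟨c, hc, hcu⟩
    by_cases hcA : c ∈ A
    · refine ⟨φ c, Finset.mem_union_left _ (Finset.mem_image_of_mem _ hcA), ?_⟩
      have := (hφ c hcA).2
      calc dist (φ c) u ≤ dist (φ c) c + dist c u := dist_triangle _ _ _
        _ ≤ r + r := by rw [dist_comm]; exact add_le_add this hcu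
        _ = 2 * r := by ring
    · exact ⟨c, Finset.mem_union_right _ (Finset.mem_sdiff.mpr ⟨hc, hcA⟩),
        hcu.trans (by linarith)⟩
end

section
/- Let (X,d) be a finite metric space, r ≥ 0, and suppose the polytope T = {(x,y) ∈ [0,1]^X × [0,1]^X : Σ_v y(v) ≤ k, Σ_{v∈B(u,r)} y(v) ≥ x(u) for all u, Σ_u a_ℓ(u)x(u) ≥ b_ℓ for all ℓ ∈ [t]} is nonempty, where a_ℓ ∈ ℝ≥0^X, b_ℓ ≥ 0. Let (x,y) ∈ T, let (S,𝒟) be the greedy partition for (x,y) with centers S = {s₁,…,s_q} and clusters D₁,…,D_q, and suppose y(B(S,r)) ≤ k − t + 1. Then there exists C ⊆ X with |C| ≤ k and a_ℓ(B(C,4r)) ≥ b_ℓ for every ℓ ∈ [t]. -/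
open scoped Classical


lemma round_small {t q : ℕ} (A : Fin t → Fin q → ℝ) (hA : ∀ ℓ i, 0 ≤ A ℓ i)
    (b : Fin t → ℝ) (K : ℝ) (z : Fin q → ℝ)
    (hz0 : ∀ i, 0 ≤ z i) (hz1 : ∀ i, z i ≤ 1)
    (hfeas : ∀ ℓ, b ℓ ≤ ∑ i, A ℓ i * z i) (hsum : ∑ i, z i ≤ K)
    (hF : (Finset.univ.filter (fun i => z i ≠ 0 ∧ z i ≠ 1)).card ≤ t) :
    ∃ S : Finset (Fin q), ((S.card : ℝ) < K + t ∨ (S.card : ℝ) ≤ K) ∧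
      ∀ ℓ, b ℓ ≤ ∑ i ∈ S, A ℓ i := by
  set F := Finset.univ.filter (fun i => z i ≠ 0 ∧ z i ≠ 1) with hFdef
  by_cases hFe : F = ∅
  · -- all coords integral
    refine ⟨Finset.univ.filter (fun i => z i = 1), Or.inr ?_, fun ℓ => ?_⟩
    · have h1 : ∀ i, z i = 0 ∨ z i = 1 := by
        intro i
        by_contra h
        push_neg at h
        have : i ∈ F := by simp [hFdef, h.1, h.2]
        simp [hFe] at this
      have : ((Finset.univ.filter (fun i => z i = 1)).card : ℝ)
          = ∑ i ∈ Finset.univ.filter (fun i => z i = 1), z i := by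
        rw [Finset.card_eq_sum_ones, Nat.cast_sum]
        exact Finset.sum_congr rfl (fun i hi => by
          simp only [Finset.mem_filter] at hi; simp [hi.2])
      rw [this]
      calc ∑ i ∈ Finset.univ.filter (fun i => z i = 1), z i
          ≤ ∑ i, z i := Finset.sum_le_sum_of_subset_of_nonneg (Finset.filter_subset _ _)
            (fun i _ _ => hz0 i)
        _ ≤ K := hsum
    · calc b ℓ ≤ ∑ i, A ℓ i * z i := hfeas ℓ
        _ = ∑ i ∈ Finset.univ.filter (fun i => z i = 1), A ℓ i * z i := by
            rw [Finset.sum_filter]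
            refine Finset.sum_congr rfl (fun i _ => ?_)
            by_cases h : z i = 1
            · simp [h]
            · have h0 : z i = 0 := by
                by_contra h0
                have : i ∈ F := by simp [hFdef, h0, h]
                simp [hFe] at this
              simp [h, h0]
        _ ≤ ∑ i ∈ Finset.univ.filter (fun i => z i = 1), A ℓ i :=
            Finset.sum_le_sum (fun i hi => by
              simp only [Finset.mem_filter] at hi
              rw [hi.2, mul_one])
  · -- F nonempty, F.card ≤ t : take support
    refine ⟨Finset.univ.filter (fun i => z i ≠ 0), Or.inl ?_, fun ℓ => ?_⟩
    · set S := Finset.univ.filter (fun i => z i ≠ 0) with hSdef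
      have hcard : (S.card : ℝ) = ∑ i ∈ S, z i + ∑ i ∈ S, (1 - z i) := by
        rw [← Finset.sum_add_distrib]
        rw [Finset.card_eq_sum_ones, Nat.cast_sum]
        exact Finset.sum_congr rfl (fun i _ => by ring)
      have h1 : ∑ i ∈ S, z i ≤ K := by
        calc ∑ i ∈ S, z i ≤ ∑ i, z i :=
            Finset.sum_le_sum_of_subset_of_nonneg (Finset.filter_subset _ _)
              (fun i _ _ => hz0 i)
          _ ≤ K := hsum
      have hFS : F ⊆ S := by
        intro i hi
        simp only [hFdef, Finset.mem_filter] at hi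
        simp [hSdef, hi.2.1]
      have h2 : ∑ i ∈ S, (1 - z i) = ∑ i ∈ F, (1 - z i) := by
        symm
        refine Finset.sum_subset hFS (fun i hiS hiF => ?_)
        simp only [hSdef, Finset.mem_filter] at hiS
        simp only [hFdef, Finset.mem_filter] at hiF
        have : z i = 1 := by tauto
        simp [this]
      have h3 : ∑ i ∈ F, (1 - z i) < (F.card : ℝ) := by
        rw [Finset.card_eq_sum_ones, Nat.cast_sum]
        push_cast
        refine Finset.sum_lt_sum_of_nonempty (Finset.nonempty_of_ne_empty hFe) ?_
        intro i hi
        simp only [hFdef, Finset.mem_filter] at hi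
        have : 0 < z i := lt_of_le_of_ne (hz0 i) (Ne.symm hi.2.1)
        linarith
      have h4 : (F.card : ℝ) ≤ (t : ℝ) := by exact_mod_cast hF
      rw [hcard, h2]
      linarith
    · calc b ℓ ≤ ∑ i, A ℓ i * z i := hfeas ℓ
        _ = ∑ i ∈ Finset.univ.filter (fun i => z i ≠ 0), A ℓ i * z i := by
            rw [Finset.sum_filter]
            refine Finset.sum_congr rfl (fun i _ => ?_)
            by_cases h : z i = 0 <;> simp [h]
        _ ≤ ∑ i ∈ Finset.univ.filter (fun i => z i ≠ 0), A ℓ i :=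
            Finset.sum_le_sum (fun i hi => by
              have := hz1 i
              have := hA ℓ i
              nlinarith [hz0 i])

lemma exists_round {t q : ℕ} (A : Fin t → Fin q → ℝ) (hA : ∀ ℓ i, 0 ≤ A ℓ i)
    (b : Fin t → ℝ) (K : ℝ) (z : Fin q → ℝ)
    (hz0 : ∀ i, 0 ≤ z i) (hz1 : ∀ i, z i ≤ 1)
    (hfeas : ∀ ℓ, b ℓ ≤ ∑ i, A ℓ i * z i) (hsum : ∑ i, z i ≤ K) :
    ∃ S : Finset (Fin q), ((S.card : ℝ) < K + t ∨ (S.card : ℝ) ≤ K) ∧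
      ∀ ℓ, b ℓ ≤ ∑ i ∈ S, A ℓ i := by
  suffices H : ∀ n : ℕ, ∀ z : Fin q → ℝ,
      (Finset.univ.filter (fun i => z i ≠ 0 ∧ z i ≠ 1)).card ≤ n →
      (∀ i, 0 ≤ z i) → (∀ i, z i ≤ 1) →
      (∀ ℓ, b ℓ ≤ ∑ i, A ℓ i * z i) → (∑ i, z i ≤ K) →
      ∃ S : Finset (Fin q), ((S.card : ℝ) < K + t ∨ (S.card : ℝ) ≤ K) ∧
        ∀ ℓ, b ℓ ≤ ∑ i ∈ S, A ℓ i by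
    exact H _ z le_rfl hz0 hz1 hfeas hsum
  intro n
  induction n with
  | zero =>
    intro z hc hz0 hz1 hfeas hsum
    exact round_small A hA b K z hz0 hz1 hfeas hsum (le_trans hc (Nat.zero_le t))
  | succ n ih =>
    intro z hc hz0 hz1 hfeas hsum
    by_cases hFt : (Finset.univ.filter (fun i => z i ≠ 0 ∧ z i ≠ 1)).card ≤ t
    · exact round_small A hA b K z hz0 hz1 hfeas hsum hFt
    set F := Finset.univ.filter (fun i => z i ≠ 0 ∧ z i ≠ 1) with hFdef
    push_neg at hFt
    -- linear dependence among columns indexed by F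
    have hnli : ¬ LinearIndependent ℝ (fun i : ↥F => (fun ℓ => A ℓ ↑i : Fin t → ℝ)) := by
      intro h
      have h2 := h.fintype_card_le_finrank
      rw [Module.finrank_fintype_fun_eq_card] at h2
      simp only [Fintype.card_coe, Fintype.card_fin] at h2
      omega
    rw [Fintype.not_linearIndependent_iff] at hnli
    obtain ⟨g, hg0, i₀, hgi₀⟩ := hnli
    set d : Fin q → ℝ := fun i => if h : i ∈ F then g ⟨i, h⟩ else 0 with hddef
    have hdrow : ∀ ℓ, ∑ i, A ℓ i * d i = 0 := by
      intro ℓ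
      have h1 := congrFun hg0 ℓ
      simp only [Finset.sum_apply, Pi.smul_apply, smul_eq_mul, Pi.zero_apply] at h1
      calc ∑ i, A ℓ i * d i = ∑ i ∈ F, A ℓ i * d i :=
            (Finset.sum_subset F.subset_univ (fun i _ hi => by
              simp [hddef, hi])).symm
        _ = ∑ i ∈ F.attach, A ℓ ↑i * d ↑i := (Finset.sum_attach F _).symm
        _ = ∑ i : ↥F, g i * A ℓ ↑i := by
            refine Finset.sum_congr rfl (fun i _ => ?_)
            simp [hddef, i.2, mul_comm]
        _ = 0 := h1
    set c : ℝ := if (∑ i, d i) ≤ 0 then 1 else -1 with hcdef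
    have hcne : c ≠ 0 := by
      rw [hcdef]; split <;> norm_num
    set e : Fin q → ℝ := fun i => c * d i with hedef
    have hesum : ∑ i, e i ≤ 0 := by
      rw [show ∑ i, e i = c * ∑ i, d i by rw [Finset.mul_sum]]
      rcases le_or_gt (∑ i, d i) 0 with h | h
      · simp only [hcdef, if_pos h]; linarith
      · rw [hcdef, if_neg (not_le.mpr h)]; nlinarith
    have herow : ∀ ℓ, ∑ i, A ℓ i * e i = 0 := by
      intro ℓ
      have : ∑ i, A ℓ i * e i = c * ∑ i, A ℓ i * d i := by
        rw [Finset.mul_sum]; refine Finset.sum_congr rfl (fun i _ => by ring)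
      rw [this, hdrow, mul_zero]
    have hesupp : ∀ i, i ∉ F → e i = 0 := by
      intro i hi; simp [hedef, hddef, hi]
    have hi₀F : (↑i₀ : Fin q) ∈ F := i₀.2
    have hei₀ : e ↑i₀ ≠ 0 := by
      simp only [hedef, hddef, dif_pos hi₀F]
      exact mul_ne_zero hcne (by simpa using hgi₀)
    set T := F.filter (fun i => e i ≠ 0) with hTdef
    have hTne : T.Nonempty := ⟨↑i₀, by simp [hTdef, hi₀F, hei₀]⟩
    set φ : Fin q → ℝ := fun i => if 0 < e i then (1 - z i) / e i else z i / (-e i)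
      with hφdef
    have hzF : ∀ i ∈ F, 0 < z i ∧ z i < 1 := by
      intro i hi
      simp only [hFdef, Finset.mem_filter] at hi
      exact ⟨lt_of_le_of_ne (hz0 i) (Ne.symm hi.2.1), lt_of_le_of_ne (hz1 i) hi.2.2⟩
    have hφpos : ∀ i ∈ T, 0 < φ i := by
      intro i hi
      simp only [hTdef, Finset.mem_filter] at hi
      obtain ⟨hz0i, hz1i⟩ := hzF i hi.1
      rcases lt_trichotomy (e i) 0 with h | h | h
      · rw [hφdef]; simp only [if_neg (not_lt.mpr h.le)]
        exact div_pos hz0i (by linarith)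
      · exact absurd h hi.2
      · rw [hφdef]; simp only [if_pos h]
        exact div_pos (by linarith) h
    obtain ⟨j, hjT, hjmin⟩ := T.exists_min_image φ hTne
    set ε := φ j with hεdef
    have hε : 0 < ε := hφpos j hjT
    have hjF : j ∈ F := (Finset.mem_filter.mp hjT).1
    have hej : e j ≠ 0 := (Finset.mem_filter.mp hjT).2
    set z' : Fin q → ℝ := fun i => z i + ε * e i with hz'def
    have hkey : ∀ i, e i ≠ 0 → (0 < e i → ε * e i ≤ 1 - z i) ∧ (e i < 0 → -z i ≤ ε * e i) := by
      intro i hie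
      have hiF : i ∈ F := by
        by_contra h; exact hie (hesupp i h)
      have hiT : i ∈ T := Finset.mem_filter.mpr ⟨hiF, hie⟩
      have hεi : ε ≤ φ i := hjmin i hiT
      constructor
      · intro hpos
        have : φ i = (1 - z i) / e i := by rw [hφdef]; simp [hpos]
        rw [this] at hεi
        calc ε * e i ≤ (1 - z i) / e i * e i := by nlinarith
          _ = 1 - z i := by field_simp
      · intro hneg
        have : φ i = z i / (-e i) := by rw [hφdef]; simp [not_lt.mpr hneg.le]
        rw [this] at hεi
        have h2 : ε * (-e i) ≤ z i := by
          calc ε * (-e i) ≤ z i / (-e i) * (-e i) := by nlinarith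
            _ = z i := by field_simp
        linarith
    have hz'0 : ∀ i, 0 ≤ z' i := by
      intro i
      rcases lt_trichotomy (e i) 0 with h | h | h
      · have := (hkey i (ne_of_lt h)).2 h
        simp only [hz'def]; linarith [hz0 i]
      · simp [hz'def, h, hz0 i]
      · simp only [hz'def]; nlinarith [hz0 i]
    have hz'1 : ∀ i, z' i ≤ 1 := by
      intro i
      rcases lt_trichotomy (e i) 0 with h | h | h
      · simp only [hz'def]; nlinarith [hz1 i]
      · simp [hz'def, h, hz1 i]
      · have := (hkey i (ne_of_gt h)).1 h
        simp only [hz'def]; linarith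
    have hz'feas : ∀ ℓ, b ℓ ≤ ∑ i, A ℓ i * z' i := by
      intro ℓ
      have : ∑ i, A ℓ i * z' i = ∑ i, A ℓ i * z i + ε * ∑ i, A ℓ i * e i := by
        rw [Finset.mul_sum, ← Finset.sum_add_distrib]
        refine Finset.sum_congr rfl (fun i _ => by simp [hz'def]; ring)
      rw [this, herow, mul_zero, add_zero]
      exact hfeas ℓ
    have hz'sum : ∑ i, z' i ≤ K := by
      have : ∑ i, z' i = ∑ i, z i + ε * ∑ i, e i := by
        rw [Finset.mul_sum, ← Finset.sum_add_distrib]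
      rw [this]
      nlinarith
    have hz'j : z' j = 0 ∨ z' j = 1 := by
      rcases lt_trichotomy (e j) 0 with h | h | h
      · left
        simp only [hz'def, hεdef, hφdef, if_neg (not_lt.mpr h.le)]
        have h1 : z j / -e j * -e j = z j := div_mul_cancel₀ _ (neg_ne_zero.mpr hej)
        linear_combination -h1
      · exact absurd h hej
      · right
        simp only [hz'def, hεdef, hφdef, if_pos h]
        have h1 : (1 - z j) / e j * e j = 1 - z j := div_mul_cancel₀ _ hej
        linarith
    have hsubset : (Finset.univ.filter (fun i => z' i ≠ 0 ∧ z' i ≠ 1)) ⊆ F.erase j := by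
      intro i hi
      simp only [Finset.mem_filter] at hi
      have hiF : i ∈ F := by
        by_contra h
        have he0 : e i = 0 := hesupp i h
        have hzz : z' i = z i := by simp [hz'def, he0]
        simp only [hFdef, Finset.mem_filter, Finset.mem_univ, true_and] at h
        push_neg at h
        rcases Classical.em (z i = 0) with h0 | h0
        · exact hi.2.1 (by rw [hzz, h0])
        · exact hi.2.2 (by rw [hzz, h h0])
      have hij : i ≠ j := by
        intro hh
        subst hh
        rcases hz'j with h | h
        · exact hi.2.1 h
        · exact hi.2.2 h
      exact Finset.mem_erase.mpr ⟨hij, hiF⟩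
    have hcard' : (Finset.univ.filter (fun i => z' i ≠ 0 ∧ z' i ≠ 1)).card ≤ n := by
      have h1 := Finset.card_le_card hsubset
      rw [Finset.card_erase_of_mem hjF] at h1
      omega
    exact ih z' hcard' hz'0 hz'1 hz'feas hz'sum

theorem stmt_10 {X : Type*} [MetricSpace X] [Fintype X]
    (r : ℝ) (hr : 0 ≤ r) (k t q : ℕ)
    (a : Fin t → X → ℝ) (ha : ∀ ℓ u, 0 ≤ a ℓ u)
    (b : Fin t → ℝ) (hb : ∀ ℓ, 0 ≤ b ℓ)
    (x y : X → ℝ)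
    (hx01 : ∀ u, 0 ≤ x u ∧ x u ≤ 1) (hy01 : ∀ u, 0 ≤ y u ∧ y u ≤ 1)
    (hyk : ∑ v : X, y v ≤ (k : ℝ))
    (hball : ∀ u : X, x u ≤ ∑ v ∈ Finset.univ.filter (fun v => dist u v ≤ r), y v)
    (hcov : ∀ ℓ : Fin t, b ℓ ≤ ∑ u : X, a ℓ u * x u)
    (s : Fin q → X) (D : Fin q → Finset X)
    (hsep : ∀ i j : Fin q, i ≠ j → dist (s i) (s j) > 4 * r)
    (hpart : ∀ u : X, ∃! i : Fin q, u ∈ D i)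
    (hsD : ∀ i, s i ∈ D i)
    (hD : ∀ i, ∀ u ∈ D i, dist (s i) u ≤ 4 * r)
    (hgood : ∀ i, ∀ u ∈ D i,
      x u ≤ ∑ v ∈ Finset.univ.filter (fun v => dist (s i) v ≤ r), y v)
    (hsmall : ∑ v ∈ Finset.univ.filter (fun v => ∃ i : Fin q, dist (s i) v ≤ r), y v
      ≤ (k : ℝ) - t + 1) :
    ∃ C : Finset X, C.card ≤ k ∧
      ∀ ℓ : Fin t,
        b ℓ ≤ ∑ u ∈ Finset.univ.filter (fun u => ∃ c ∈ C, dist c u ≤ 4 * r), a ℓ u := by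
  rcases Nat.eq_zero_or_pos t with ht0 | ht1
  · subst ht0
    exact ⟨∅, by simp, fun ℓ => ℓ.elim0⟩
  -- setup
  set Bi : Fin q → Finset X := fun i => Finset.univ.filter (fun v => dist (s i) v ≤ r)
    with hBidef
  set z : Fin q → ℝ := fun i => min 1 (∑ v ∈ Bi i, y v) with hzdef
  set A : Fin t → Fin q → ℝ := fun ℓ i => ∑ u ∈ D i, a ℓ u with hAdef
  have hA : ∀ ℓ i, 0 ≤ A ℓ i := fun ℓ i =>
    Finset.sum_nonneg (fun u _ => ha ℓ u)
  have hz0 : ∀ i, 0 ≤ z i := fun i =>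
    le_min (by norm_num) (Finset.sum_nonneg (fun v _ => (hy01 v).1))
  have hz1 : ∀ i, z i ≤ 1 := fun i => min_le_left _ _
  -- the fiber function
  have hf : ∀ u : X, ∃ i, u ∈ D i := fun u => (hpart u).exists
  set f : X → Fin q := fun u => (hf u).choose with hfdef
  have hfmem : ∀ u, u ∈ D (f u) := fun u => (hf u).choose_spec
  have hmemf : ∀ (u : X) (i : Fin q), u ∈ D i ↔ f u = i := by
    intro u i
    constructor
    · intro hu
      obtain ⟨j, hj, huniq⟩ := hpart u
      rw [huniq i hu, huniq (f u) (hfmem u)]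
    · rintro rfl; exact hfmem u
  have hDfib : ∀ i, D i = Finset.univ.filter (fun u => f u = i) := by
    intro i; ext u; simp [hmemf u i]
  -- partition of sums over X
  have hpartsum : ∀ g : X → ℝ, ∑ u : X, g u = ∑ i : Fin q, ∑ u ∈ D i, g u := by
    intro g
    rw [show (∑ i : Fin q, ∑ u ∈ D i, g u)
        = ∑ i : Fin q, ∑ u ∈ Finset.univ.filter (fun u => f u = i), g u from
      Finset.sum_congr rfl (fun i _ => by rw [hDfib i])]
    exact (Finset.sum_fiberwise _ _ _).symm
  -- feasibility of z for the simplified LP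
  have hfeas : ∀ ℓ, b ℓ ≤ ∑ i, A ℓ i * z i := by
    intro ℓ
    calc b ℓ ≤ ∑ u : X, a ℓ u * x u := hcov ℓ
      _ = ∑ i : Fin q, ∑ u ∈ D i, a ℓ u * x u := hpartsum _
      _ ≤ ∑ i : Fin q, ∑ u ∈ D i, a ℓ u * z i := by
          refine Finset.sum_le_sum (fun i _ => Finset.sum_le_sum (fun u hu => ?_))
          refine mul_le_mul_of_nonneg_left ?_ (ha ℓ u)
          exact le_min (hx01 u).2 (hgood i u hu)
      _ = ∑ i, A ℓ i * z i := by
          refine Finset.sum_congr rfl (fun i _ => ?_)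
          rw [hAdef, Finset.sum_mul]
  -- disjointness of the balls
  have hBdisj : ((Finset.univ : Finset (Fin q)) : Set (Fin q)).PairwiseDisjoint Bi := by
    intro i _ j _ hij
    refine Finset.disjoint_left.mpr (fun v hvi hvj => ?_)
    simp only [hBidef, Finset.mem_filter, Finset.mem_univ, true_and] at hvi hvj
    have h1 : dist (s i) (s j) ≤ dist (s i) v + dist v (s j) := dist_triangle _ _ _
    have h2 : dist v (s j) = dist (s j) v := dist_comm _ _
    have := hsep i j hij
    linarith
  have hsum : ∑ i, z i ≤ (k : ℝ) - t + 1 := by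
    calc ∑ i, z i ≤ ∑ i, ∑ v ∈ Bi i, y v :=
        Finset.sum_le_sum (fun i _ => min_le_right _ _)
      _ = ∑ v ∈ Finset.univ.biUnion Bi, y v := (Finset.sum_biUnion hBdisj).symm
      _ ≤ ∑ v ∈ Finset.univ.filter (fun v => ∃ i : Fin q, dist (s i) v ≤ r), y v := by
          refine Finset.sum_le_sum_of_subset_of_nonneg ?_ (fun v _ _ => (hy01 v).1)
          intro v hv
          obtain ⟨i, _, hvi⟩ := Finset.mem_biUnion.mp hv
          simp only [hBidef, Finset.mem_filter, Finset.mem_univ, true_and] at hvi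
          simp only [Finset.mem_filter, Finset.mem_univ, true_and]
          exact ⟨i, hvi⟩
      _ ≤ (k : ℝ) - t + 1 := hsmall
  obtain ⟨S, hScard, hSfeas⟩ := exists_round A hA b ((k : ℝ) - t + 1) z hz0 hz1 hfeas hsum
  refine ⟨S.image s, ?_, ?_⟩
  · have h1 : (S.card : ℝ) ≤ (k : ℝ) := by
      rcases hScard with h | h
      · have ht1' : (1 : ℝ) ≤ t := by exact_mod_cast ht1
        have : (S.card : ℝ) < (k : ℝ) + 1 := by linarith
        have : S.card < k + 1 := by exact_mod_cast this
        exact_mod_cast Nat.lt_succ_iff.mp this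
      · have ht1' : (1 : ℝ) ≤ t := by exact_mod_cast ht1
        linarith
    have h2 : S.card ≤ k := by exact_mod_cast h1
    exact le_trans Finset.card_image_le h2
  · intro ℓ
    have hDdisj : (↑S : Set (Fin q)).PairwiseDisjoint D := by
      intro i _ j _ hij
      refine Finset.disjoint_left.mpr (fun u hui huj => ?_)
      rw [hmemf] at hui huj
      exact hij (hui.symm.trans huj)
    calc b ℓ ≤ ∑ i ∈ S, A ℓ i := hSfeas ℓ
      _ = ∑ u ∈ S.biUnion D, a ℓ u := (Finset.sum_biUnion hDdisj).symm
      _ ≤ ∑ u ∈ Finset.univ.filter (fun u => ∃ c ∈ S.image s, dist c u ≤ 4 * r), a ℓ u := by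
          refine Finset.sum_le_sum_of_subset_of_nonneg ?_ (fun u _ _ => ha ℓ u)
          intro u hu
          obtain ⟨i, hiS, hui⟩ := Finset.mem_biUnion.mp hu
          simp only [Finset.mem_filter, Finset.mem_univ, true_and]
          exact ⟨s i, Finset.mem_image_of_mem s hiS, hD i u hui⟩
end

section
/- Let G = (V,E) be a graph and t ∈ ℕ. Construct a γ-Colorful k-Center instance on the real line with X = {1,…,|V|} ⊆ ℝ, γ = |E| colors where the edge e_ℓ = {u_i, u_j} defines color class X_ℓ = {i, j} with requirement m_ℓ = 1, and k = t. Then this instance has a solution of radius 0 if and only if G has a vertex cover of size at most t. -/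
theorem stmt_16 (n t : ℕ) (G : SimpleGraph (Fin n)) [DecidableEq (Fin n)] :
    (∃ C : Finset ℝ,
        C ⊆ Finset.image (fun i : Fin n => ((i : ℕ) : ℝ) + 1) Finset.univ ∧
        C.card ≤ t ∧
        ∀ i j : Fin n, G.Adj i j →
          ∃ c ∈ C, dist c (((i : ℕ) : ℝ) + 1) ≤ 0 ∨ dist c (((j : ℕ) : ℝ) + 1) ≤ 0)
      ↔
    ∃ S : Finset (Fin n), S.card ≤ t ∧
      ∀ i j : Fin n, G.Adj i j → i ∈ S ∨ j ∈ S := by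
  have hf : Function.Injective (fun i : Fin n => ((i : ℕ) : ℝ) + 1) := by
    intro a b hab
    simp only [add_left_inj, Nat.cast_inj] at hab
    exact Fin.val_injective hab
  constructor
  · rintro ⟨C, hsub, hcard, hcov⟩
    refine ⟨Finset.univ.filter (fun i : Fin n => ((i : ℕ) : ℝ) + 1 ∈ C), ?_, ?_⟩
    · calc (Finset.univ.filter (fun i : Fin n => ((i : ℕ) : ℝ) + 1 ∈ C)).card
          = ((Finset.univ.filter (fun i : Fin n => ((i : ℕ) : ℝ) + 1 ∈ C)).image
              (fun i : Fin n => ((i : ℕ) : ℝ) + 1)).card := by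
            rw [Finset.card_image_of_injective _ hf]
        _ ≤ C.card := by
            apply Finset.card_le_card
            intro x hx
            simp only [Finset.mem_image, Finset.mem_filter] at hx
            obtain ⟨i, ⟨_, hi⟩, rfl⟩ := hx
            exact hi
        _ ≤ t := hcard
    · intro i j hij
      obtain ⟨c, hc, hd⟩ := hcov i j hij
      rcases hd with hd | hd
      · left
        have : c = ((i : ℕ) : ℝ) + 1 := by
          have := dist_nonneg (x := c) (y := ((i : ℕ) : ℝ) + 1)
          exact dist_le_zero.mp hd
        simp [Finset.mem_filter, ← this, hc]
      · right
        have : c = ((j : ℕ) : ℝ) + 1 := dist_le_zero.mp hd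
        simp [Finset.mem_filter, ← this, hc]
  · rintro ⟨S, hcard, hcov⟩
    refine ⟨S.image (fun i : Fin n => ((i : ℕ) : ℝ) + 1), ?_, ?_, ?_⟩
    · exact Finset.image_subset_image (Finset.subset_univ S)
    · exact (Finset.card_image_le).trans hcard
    · intro i j hij
      rcases hcov i j hij with h | h
      · exact ⟨_, Finset.mem_image_of_mem _ h, Or.inl (by simp)⟩
      · exact ⟨_, Finset.mem_image_of_mem _ h, Or.inr (by simp)⟩
end
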